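/- Let r ≥ 2 be an integer. Then for every x ∈ [0,1], ∑_{k≥r} ( (r-1)/(k(k-1)) ) · g_k^r(x) = 1, where g_k^r(x) = ∑_{i=0}^{r-1} C(k,i) x^{k-i-1} (1-x)^i. (Note (p_k)_{k≥r} with p_k = (r-1)/(k(k-1)) is a probability mass function on the integers k ≥ r.) -/

import Mathlib

/-- The polynomial `g_k^r(x) = ∑_{i=0}^{r-1} C(k,i) x^(k-i-1) (1-x)^i`. -/
noncomputable def g (r k : ℕ) (x : ℝ) : ℝ :=
  ∑ i ∈ Finset.range r, (k.choose i : ℝ) * x ^ (k - i - 1) * (1 - x) ^ i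

/-- Closed form for the tail `1 - partial sum`. -/
noncomputable def Aa (r N : ℕ) (x : ℝ) : ℝ :=
  (∑ i ∈ Finset.range (r-1), ((r:ℝ)-1-i) * (((N-1).choose i : ℕ) : ℝ) * x^(N-2-i) * (1-x)^i)
    / ((N:ℝ)-1)

lemma cast1 (k i : ℕ) (hk : 1 ≤ k) (hi : 1 ≤ i) :
    (k:ℝ) * (((k-1).choose (i-1) : ℕ) : ℝ) = (i:ℝ) * ((k.choose i : ℕ) : ℝ) := by
  have h := Nat.add_one_mul_choose_eq (k-1) (i-1)
  have hk' : (k-1)+1 = k := by omega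
  have hi' : (i-1)+1 = i := by omega
  rw [hk', hi'] at h
  have := congrArg (Nat.cast : ℕ → ℝ) h
  push_cast at this
  linarith

lemma cast2 (k i : ℕ) (hk : 1 ≤ k) :
    (k:ℝ) * (((k-1).choose i : ℕ) : ℝ) = ((k:ℝ) - i) * ((k.choose i : ℕ) : ℝ) := by
  rcases Nat.eq_zero_or_pos i with hi | hi
  · subst hi; simp
  · have hpas : k.choose i = (k-1).choose (i-1) + (k-1).choose i := by
      have h1 : k = (k-1)+1 := by omega
      have h2 : i = (i-1)+1 := by omega
      rw [h1, h2, Nat.choose_succ_succ']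
      simp only [Nat.add_sub_cancel]
    have h1 := cast1 k i hk hi
    have : ((k.choose i : ℕ) : ℝ) = (((k-1).choose (i-1) : ℕ) : ℝ) + (((k-1).choose i : ℕ) : ℝ) := by
      exact_mod_cast congrArg (Nat.cast : ℕ → ℝ) hpas
    nlinarith [this, h1]

lemma binom_one (m : ℕ) (x : ℝ) :
    ∑ i ∈ Finset.range (m+1), ((m.choose i : ℕ) : ℝ) * x^(m-i) * (1-x)^i = 1 := by
  have h : ((1-x)+x)^m = ∑ k ∈ Finset.range (m+1), (1-x)^k * x^(m-k) * ((m.choose k : ℕ) : ℝ) :=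
    add_pow (1-x) x m
  simp only [sub_add_cancel, one_pow] at h
  refine Eq.trans ?_ h.symm
  exact Finset.sum_congr rfl (fun i _ => by ring)

lemma Aa_start (r : ℕ) (hr : 2 ≤ r) (x : ℝ) : Aa r r x = 1 := by
  have h2 : r - 1 = (r-2)+1 := by omega
  have hcast : ((r-1 : ℕ) : ℝ) = (r:ℝ) - 1 := by
    have : (1:ℕ) ≤ r := by omega
    push_cast [this]
    ring
  have key : ∀ i ∈ Finset.range (r-1),
      ((r:ℝ)-1-i) * (((r-1).choose i : ℕ) : ℝ) * x^(r-2-i) * (1-x)^i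
        = ((r:ℝ)-1) * ((((r-2).choose i : ℕ) : ℝ) * x^(r-2-i) * (1-x)^i) := by
    intro i hi
    have hc := cast2 (r-1) i (by omega)
    rw [hcast, show r-1-1 = r-2 from by omega] at hc
    linear_combination (x^(r-2-i) * (1-x)^i) * hc.symm
  rw [Aa, Finset.sum_congr rfl key, ← Finset.mul_sum, h2, binom_one (r-2) x]
  have : (r:ℝ) - 1 ≠ 0 := by
    have : (2:ℝ) ≤ (r:ℝ) := by exact_mod_cast hr
    linarith
  field_simp

lemma expandA (r k : ℕ) (hr : 2 ≤ r) (hk : r ≤ k) (x : ℝ) :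
    Aa r k x = ∑ i ∈ Finset.range r,
      ((if i = r-1 then 0 else ((r:ℝ)-1-i) * (((k-1).choose i : ℕ) : ℝ) * x^(k-1-i) * (1-x)^i)
       + (if i = 0 then 0
          else ((r:ℝ)-i) * (((k-1).choose (i-1) : ℕ) : ℝ) * x^(k-1-i) * (1-x)^i))
      / ((k:ℝ)-1) := by
  rw [Aa, ← Finset.sum_div]
  congr 1
  have step : ∀ i ∈ Finset.range (r-1),
      ((r:ℝ)-1-i) * (((k-1).choose i : ℕ) : ℝ) * x^(k-2-i) * (1-x)^i
      = ((r:ℝ)-1-i) * (((k-1).choose i : ℕ) : ℝ) * x^(k-1-i) * (1-x)^i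
        + ((r:ℝ)-1-i) * (((k-1).choose i : ℕ) : ℝ) * x^(k-2-i) * (1-x)^(i+1) := by
    intro i hi
    simp only [Finset.mem_range] at hi
    rw [show k-1-i = (k-2-i)+1 from by omega]
    ring
  rw [Finset.sum_congr rfl step, Finset.sum_add_distrib, Finset.sum_add_distrib]
  congr 1
  · -- first piece
    have h1 : ∑ i ∈ Finset.range r,
        (if i = r-1 then 0
         else ((r:ℝ)-1-i) * (((k-1).choose i : ℕ) : ℝ) * x^(k-1-i) * (1-x)^i)
        = ∑ i ∈ Finset.range (r-1),
          (if i = r-1 then 0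
           else ((r:ℝ)-1-i) * (((k-1).choose i : ℕ) : ℝ) * x^(k-1-i) * (1-x)^i)
          + (if r-1 = r-1 then 0
             else ((r:ℝ)-1-(r-1:ℕ)) * (((k-1).choose (r-1) : ℕ) : ℝ) * x^(k-1-(r-1)) * (1-x)^(r-1)) := by
      rw [← Finset.sum_range_succ, show r-1+1 = r from by omega]
    rw [h1, if_pos rfl, add_zero]
    refine (Finset.sum_congr rfl ?_).symm
    intro i hi
    simp only [Finset.mem_range] at hi
    rw [if_neg (by omega)]
  · -- second piece
    have h2 := Finset.sum_range_succ'
      (fun i => if i = 0 then (0:ℝ)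
        else ((r:ℝ)-i) * (((k-1).choose (i-1) : ℕ) : ℝ) * x^(k-1-i) * (1-x)^i) (r-1)
    rw [show r-1+1 = r from by omega] at h2
    simp only at h2
    rw [h2]
    simp only [ite_true, add_zero]
    refine (Finset.sum_congr rfl ?_).symm
    intro i hi
    simp only [Finset.mem_range] at hi
    rw [if_neg (by omega), Nat.add_sub_cancel, show k-1-(i+1) = k-2-i from by omega]
    push_cast
    ring

lemma expandA' (r k : ℕ) (hr : 2 ≤ r) (hk : r ≤ k) (x : ℝ) :
    Aa r (k+1) x = ∑ i ∈ Finset.range r,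
      (if i = r-1 then 0 else ((r:ℝ)-1-i) * ((k.choose i : ℕ) : ℝ) * x^(k-1-i) * (1-x)^i)
        / (k:ℝ) := by
  rw [Aa, ← Finset.sum_div]
  have e1 : ((k+1:ℕ):ℝ) - 1 = (k:ℝ) := by push_cast; ring
  rw [show k+1-1 = k from rfl, e1]
  congr 1
  have h1 : ∑ i ∈ Finset.range r,
      (if i = r-1 then 0
       else ((r:ℝ)-1-i) * ((k.choose i : ℕ) : ℝ) * x^(k-1-i) * (1-x)^i)
      = ∑ i ∈ Finset.range (r-1),
        (if i = r-1 then 0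
         else ((r:ℝ)-1-i) * ((k.choose i : ℕ) : ℝ) * x^(k-1-i) * (1-x)^i)
        + (if r-1 = r-1 then 0
           else ((r:ℝ)-1-(r-1:ℕ)) * ((k.choose (r-1) : ℕ) : ℝ) * x^(k-1-(r-1)) * (1-x)^(r-1)) := by
    rw [← Finset.sum_range_succ, show r-1+1 = r from by omega]
  rw [h1, if_pos rfl, add_zero]
  refine Finset.sum_congr rfl ?_
  intro i hi
  simp only [Finset.mem_range] at hi
  rw [if_neg (by omega), show k+1-2-i = k-1-i from by omega]

lemma tele (r k : ℕ) (hr : 2 ≤ r) (hk : r ≤ k) (x : ℝ) :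
    ((r:ℝ)-1)/((k:ℝ)*((k:ℝ)-1)) * g r k x = Aa r k x - Aa r (k+1) x := by
  have hk2 : 2 ≤ k := le_trans hr hk
  have hkne : (k:ℝ) ≠ 0 := by positivity
  have hk1ne : (k:ℝ) - 1 ≠ 0 := by
    have : (2:ℝ) ≤ (k:ℝ) := by exact_mod_cast hk2
    linarith
  rw [g, Finset.mul_sum, expandA r k hr hk x, expandA' r k hr hk x,
    ← Finset.sum_sub_distrib]
  refine Finset.sum_congr rfl ?_
  intro i hi
  simp only [Finset.mem_range] at hi
  rw [show k-i-1 = k-1-i from by omega]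
  by_cases hi0 : i = 0
  · subst hi0
    rw [if_neg (by omega : (0:ℕ) ≠ r-1), if_pos rfl, if_neg (by omega : (0:ℕ) ≠ r-1)]
    simp only [Nat.choose_zero_right, Nat.cast_one, Nat.cast_zero, pow_zero]
    field_simp
    ring
  · have hiR : (1:ℝ) ≤ (i:ℝ) := by exact_mod_cast Nat.one_le_iff_ne_zero.mpr hi0
    have h1 := cast1 k i (by omega) (by omega)
    by_cases hir : i = r-1
    · rw [if_pos hir, if_pos hir, if_neg hi0]
      have hiRr : (i:ℝ) = (r:ℝ) - 1 := by
        rw [hir]; push_cast [show (1:ℕ) ≤ r from by omega]; ring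
      have e3 : (((k-1).choose (i-1) : ℕ) : ℝ) = (i:ℝ) * ((k.choose i : ℕ) : ℝ) / k := by
        rw [eq_div_iff hkne]; linear_combination h1
      rw [zero_add, zero_div, sub_zero, e3, hiRr]
      field_simp
      ring
    · rw [if_neg hir, if_neg hir, if_neg hi0]
      have h2 := cast2 k i (by omega)
      have e2 : (((k-1).choose i : ℕ) : ℝ) = ((k:ℝ)-i) * ((k.choose i : ℕ) : ℝ) / k := by
        rw [eq_div_iff hkne]; linear_combination h2
      have e3 : (((k-1).choose (i-1) : ℕ) : ℝ) = (i:ℝ) * ((k.choose i : ℕ) : ℝ) / k := by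
        rw [eq_div_iff hkne]; linear_combination h1
      rw [e2, e3]
      field_simp
      ring

lemma partial_sum (r : ℕ) (hr : 2 ≤ r) (x : ℝ) (N : ℕ) (hN : r ≤ N) :
    ∑ k ∈ Finset.range N,
      (if r ≤ k then ((r : ℝ) - 1) / ((k : ℝ) * ((k : ℝ) - 1)) * g r k x else 0)
      = 1 - Aa r N x := by
  induction N with
  | zero => omega
  | succ n ih =>
    rcases Nat.lt_or_ge n r with h | h
    · have hnr : n + 1 = r := by omega
      have hz : ∀ k ∈ Finset.range (n+1),
          (if r ≤ k then ((r : ℝ) - 1) / ((k : ℝ) * ((k : ℝ) - 1)) * g r k x else 0) = 0 := by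
        intro k hk
        simp only [Finset.mem_range] at hk
        exact if_neg (by omega)
      rw [Finset.sum_congr rfl hz, Finset.sum_const_zero, hnr, Aa_start r hr x]
      ring
    · rw [Finset.sum_range_succ, ih h, if_pos h, tele r n hr h x]
      ring

lemma binom_term_le_one (m i : ℕ) (x : ℝ) (hx : x ∈ Set.Icc (0:ℝ) 1) (hi : i ≤ m) :
    ((m.choose i : ℕ) : ℝ) * x^(m-i) * (1-x)^i ≤ 1 := by
  obtain ⟨hx0, hx1⟩ := hx
  have h1x : (0:ℝ) ≤ 1 - x := by linarith
  have := Finset.single_le_sum (f := fun j => ((m.choose j : ℕ) : ℝ) * x^(m-j) * (1-x)^j)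
    (fun j _ => by positivity) (Finset.mem_range.mpr (Nat.lt_succ_of_le hi))
  calc ((m.choose i : ℕ) : ℝ) * x^(m-i) * (1-x)^i
      ≤ ∑ j ∈ Finset.range (m+1), ((m.choose j : ℕ) : ℝ) * x^(m-j) * (1-x)^j := this
    _ = 1 := binom_one m x

lemma choose_two_bound (n i : ℕ) (hi : i < n/2) :
    (n+1).choose i ≤ 2 * n.choose i := by
  rcases Nat.eq_zero_or_pos i with h0 | h0
  · subst h0; simp
  · have h : (n+1).choose i = n.choose (i-1) + n.choose i := by
      rw [show i = (i-1)+1 from by omega, Nat.choose_succ_succ']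
      simp only [Nat.add_sub_cancel]
    have hle : n.choose (i-1) ≤ n.choose i := by
      have := Nat.choose_le_succ_of_lt_half_left (r := i-1) (n := n) (by omega)
      rwa [show i-1+1 = i from by omega] at this
    omega

lemma Aa_tendsto (r : ℕ) (hr : 2 ≤ r) (x : ℝ) (hx : x ∈ Set.Icc (0:ℝ) 1) :
    Filter.Tendsto (fun N => Aa r N x) Filter.atTop (nhds 0) := by
  obtain ⟨hx0, hx1⟩ := hx
  have h1x : (0:ℝ) ≤ 1 - x := by linarith
  have h0 : ∀ᶠ N : ℕ in Filter.atTop, 0 ≤ Aa r N x := by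
    filter_upwards [Filter.eventually_ge_atTop (2*r+6)] with N hN
    rw [Aa]
    apply div_nonneg
    · apply Finset.sum_nonneg
      intro i hi
      simp only [Finset.mem_range] at hi
      have : (i:ℝ) ≤ (r:ℝ) - 1 - 1 + 1 := by
        have : (i:ℝ) + 1 ≤ ((r-1:ℕ):ℝ) := by exact_mod_cast hi
        push_cast [show (1:ℕ) ≤ r from by omega] at this
        linarith
      have hri : (0:ℝ) ≤ (r:ℝ) - 1 - i := by linarith
      positivity
    · have : (2:ℝ) ≤ (N:ℝ) := by exact_mod_cast le_trans (by omega) hN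
      linarith
  have h1 : ∀ᶠ N : ℕ in Filter.atTop, Aa r N x ≤ (2*(r:ℝ)^2)/((N:ℝ)-1) := by
    filter_upwards [Filter.eventually_ge_atTop (2*r+6)] with N hN
    rw [Aa, div_le_div_iff_of_pos_right]
    · calc ∑ i ∈ Finset.range (r-1),
            ((r:ℝ)-1-i) * (((N-1).choose i : ℕ) : ℝ) * x^(N-2-i) * (1-x)^i
          ≤ ∑ i ∈ Finset.range (r-1), (r:ℝ) * 2 := by
            apply Finset.sum_le_sum
            intro i hi
            simp only [Finset.mem_range] at hi
            have hir : i ≤ r - 2 := by omega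
            have hch : ((N-1).choose i : ℕ) ≤ 2 * ((N-2).choose i) := by
              have := choose_two_bound (N-2) i (by omega)
              rwa [show N-2+1 = N-1 from by omega] at this
            have hbt : (((N-2).choose i : ℕ) : ℝ) * x^(N-2-i) * (1-x)^i ≤ 1 :=
              binom_term_le_one (N-2) i x (Set.mem_Icc.mpr ⟨hx0, hx1⟩) (by omega)
            have hri : (0:ℝ) ≤ (r:ℝ) - 1 - i := by
              have : (i:ℝ) + 1 ≤ ((r-1:ℕ):ℝ) := by exact_mod_cast hi
              push_cast [show (1:ℕ) ≤ r from by omega] at this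
              linarith
            have hrr : ((r:ℝ)-1-i) ≤ (r:ℝ) := by
              have : (0:ℝ) ≤ i := Nat.cast_nonneg i
              linarith
            have hchR : (((N-1).choose i : ℕ) : ℝ) ≤ 2 * (((N-2).choose i : ℕ) : ℝ) := by
              exact_mod_cast hch
            have hb1 : ((r:ℝ)-1-i) * (((N-1).choose i : ℕ) : ℝ) * x^(N-2-i) * (1-x)^i
                ≤ (r:ℝ) * (2 * ((((N-2).choose i : ℕ) : ℝ) * x^(N-2-i) * (1-x)^i)) := by
              have hxp : (0:ℝ) ≤ x^(N-2-i) := by positivity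
              have hup : (0:ℝ) ≤ (1-x)^i := by positivity
              have hcn : (0:ℝ) ≤ (((N-1).choose i : ℕ) : ℝ) := Nat.cast_nonneg _
              have hmm : ((r:ℝ)-1-i) * (((N-1).choose i : ℕ) : ℝ)
                  ≤ (r:ℝ) * (2 * (((N-2).choose i : ℕ) : ℝ)) :=
                mul_le_mul hrr hchR hcn (Nat.cast_nonneg r)
              have h := mul_le_mul_of_nonneg_right hmm (mul_nonneg hxp hup)
              calc ((r:ℝ)-1-i) * (((N-1).choose i : ℕ) : ℝ) * x^(N-2-i) * (1-x)^i
                  = (((r:ℝ)-1-i) * (((N-1).choose i : ℕ) : ℝ)) * (x^(N-2-i) * (1-x)^i) := by ring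
                _ ≤ ((r:ℝ) * (2 * (((N-2).choose i : ℕ) : ℝ))) * (x^(N-2-i) * (1-x)^i) := h
                _ = (r:ℝ) * (2 * ((((N-2).choose i : ℕ) : ℝ) * x^(N-2-i) * (1-x)^i)) := by ring
            calc ((r:ℝ)-1-i) * (((N-1).choose i : ℕ) : ℝ) * x^(N-2-i) * (1-x)^i
                ≤ (r:ℝ) * (2 * ((((N-2).choose i : ℕ) : ℝ) * x^(N-2-i) * (1-x)^i)) := hb1
              _ ≤ (r:ℝ) * (2 * 1) := by
                  apply mul_le_mul_of_nonneg_left _ (Nat.cast_nonneg r)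
                  linarith
              _ = (r:ℝ) * 2 := by ring
        _ ≤ 2*(r:ℝ)^2 := by
            rw [Finset.sum_const, nsmul_eq_mul, Finset.card_range]
            have h1 : ((r-1:ℕ):ℝ) ≤ (r:ℝ) := by exact_mod_cast Nat.sub_le r 1
            calc ((r-1:ℕ):ℝ) * ((r:ℝ)*2) ≤ (r:ℝ) * ((r:ℝ)*2) :=
                mul_le_mul_of_nonneg_right h1 (by positivity)
              _ = 2*(r:ℝ)^2 := by ring
    · have : (2:ℝ) ≤ (N:ℝ) := by exact_mod_cast le_trans (by omega) hN
      linarith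
  have h2 : Filter.Tendsto (fun N : ℕ => (2*(r:ℝ)^2)/((N:ℝ)-1)) Filter.atTop (nhds 0) := by
    apply Filter.Tendsto.div_atTop (tendsto_const_nhds)
    have : Filter.Tendsto (fun N : ℕ => (N:ℝ)) Filter.atTop Filter.atTop :=
      tendsto_natCast_atTop_atTop
    exact Filter.tendsto_atTop_add_const_right _ (-1) this |>.congr (fun n => by ring)
  exact tendsto_of_tendsto_of_tendsto_of_le_of_le' tendsto_const_nhds h2 h0 h1

/-- For every integer `r ≥ 2` and every `x ∈ [0,1]`,
`∑_{k≥r} ((r-1)/(k(k-1))) · g_k^r(x) = 1`. -/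
theorem G_xi_r_eq_one (r : ℕ) (hr : 2 ≤ r) (x : ℝ) (hx : x ∈ Set.Icc (0 : ℝ) 1) :
    ∑' k : ℕ, (if r ≤ k then ((r : ℝ) - 1) / ((k : ℝ) * ((k : ℝ) - 1)) * g r k x else 0)
      = 1 := by
  obtain ⟨hx0, hx1⟩ := hx
  have h1x : (0:ℝ) ≤ 1 - x := by linarith
  set f : ℕ → ℝ :=
    fun k => if r ≤ k then ((r : ℝ) - 1) / ((k : ℝ) * ((k : ℝ) - 1)) * g r k x else 0 with hf
  have hnn : ∀ k, 0 ≤ f k := by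
    intro k
    rw [hf]
    dsimp only
    split_ifs with h
    · have hk2 : (2:ℝ) ≤ (k:ℝ) := by exact_mod_cast le_trans hr h
      have hr1 : (0:ℝ) ≤ (r:ℝ) - 1 := by
        have : (2:ℝ) ≤ (r:ℝ) := by exact_mod_cast hr
        linarith
      apply mul_nonneg
      · apply div_nonneg hr1
        nlinarith
      · rw [g]
        apply Finset.sum_nonneg
        intro i _
        positivity
    · exact le_refl 0
  have hsum : HasSum f 1 := by
    rw [hasSum_iff_tendsto_nat_of_nonneg hnn]
    have heq : ∀ᶠ N : ℕ in Filter.atTop,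
        1 - Aa r N x = ∑ k ∈ Finset.range N, f k := by
      filter_upwards [Filter.eventually_ge_atTop r] with N hN
      exact (partial_sum r hr x N hN).symm
    have : Filter.Tendsto (fun N => 1 - Aa r N x) Filter.atTop (nhds 1) := by
      have := (Aa_tendsto r hr x (Set.mem_Icc.mpr ⟨hx0, hx1⟩)).const_sub 1
      simpa using this
    exact Filter.Tendsto.congr' heq this
  exact hsum.tsum_eq
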